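/- arXiv:2002.05382 — 5 statements merged into one kernel-verified Lean document; each statement's English description precedes it below -/
import Mathlib

section
/- For a positive natural number a, let L(a) denote the strictly decreasing list of the positions of the 1-bits in the binary representation of a (most significant first), and define Bit_a(ℓ) to be the ℓ-th entry of L(a) when ℓ ≤ length of L(a), and −1 otherwise (entries are taken as integers). Then for all distinct positive natural numbers a and b: (i) there exists a least index ℓ ≥ 1 such that Bit_a(ℓ) ≠ Bit_b(ℓ), and this ℓ satisfies ℓ ≤ min(popcount(a), popcount(b)) + 1, where popcount denotes the number of 1-bits; (ii) for this least ℓ, a < b if and only if Bit_a(ℓ) < Bit_b(ℓ). -/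
/-- `onesList a` is the list of positions of the 1-bits of `a` (position 0 = least
significant bit), listed in strictly decreasing order (most significant first). -/
def onesList (a : ℕ) : List ℕ :=
  ((List.range (a + 1)).filter (fun i => a.testBit i)).reverse

/-- Number of 1-bits of `a`. -/
def popCount (a : ℕ) : ℕ := (onesList a).length

/-- `bitFn a ℓ` is the `ℓ`-th entry (1-indexed) of `onesList a` as an integer,
i.e. the position of the `ℓ`-th 1-bit of `a` counted from the most significant
bit, and `-1` if `a` has fewer than `ℓ` one-bits. -/
def bitFn (a : ℕ) (ℓ : ℕ) : ℤ :=
  ((onesList a)[ℓ - 1]?).elim (-1) (fun x => (x : ℤ))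

lemma mem_bitIndices_iff : ∀ n i : ℕ, i ∈ n.bitIndices ↔ n.testBit i := by
  intro n
  induction n using Nat.strong_induction_on with
  | _ n ih =>
    intro i
    rcases Nat.eq_zero_or_pos n with rfl | hn
    · simp
    rcases Nat.even_or_odd n with ⟨m, hm⟩ | ⟨m, hm⟩
    · subst hm
      have hm2 : m + m = 2 * m := by ring
      rw [hm2, Nat.bitIndices_two_mul]
      cases i with
      | zero => simp [Nat.testBit_zero, Nat.mul_mod_right]
      | succ i =>
        rw [Nat.testBit_succ]
        have : 2 * m / 2 = m := by omega
        rw [this, ← ih m (by omega) i]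
        constructor
        · rintro h
          simp only [List.mem_map] at h
          obtain ⟨x, hx, hxe⟩ := h
          have : x = i := by omega
          rwa [← this]
        · intro h; exact List.mem_map.2 ⟨i, h, rfl⟩
    · subst hm
      rw [Nat.bitIndices_two_mul_add_one]
      cases i with
      | zero => simp [Nat.testBit_zero, Nat.mul_add_mod]
      | succ i =>
        rw [Nat.testBit_succ]
        have : (2 * m + 1) / 2 = m := by omega
        rw [this, ← ih m (by omega) i]
        simp only [List.mem_cons, List.mem_map]
        constructor
        · rintro (h | ⟨x, hx, hxe⟩)
          · omega
          · have : x = i := by omega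
            rwa [← this]
        · intro h; exact Or.inr ⟨i, h, rfl⟩

lemma onesList_eq (a : ℕ) : onesList a = a.bitIndices.reverse := by
  unfold onesList
  congr 1
  refine List.Perm.eq_of_pairwise (le := (· < ·)) (fun _ _ _ _ h1 h2 => absurd (h1.trans h2) (lt_irrefl _)) (List.pairwise_lt_range.filter _) Nat.bitIndices_sorted.pairwise ?_
  refine (List.perm_ext_iff_of_nodup (List.nodup_range.filter _) Nat.bitIndices_sorted.nodup).2 ?_
  intro i
  rw [List.mem_filter, List.mem_range, mem_bitIndices_iff]
  constructor
  · rintro ⟨_, h⟩; exact h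
  · intro h
    refine ⟨?_, h⟩
    have h2 : 2 ^ i ≤ a := Nat.ge_two_pow_of_testBit h
    have := Nat.lt_two_pow_self (n := i)
    omega

lemma onesList_sorted (a : ℕ) : (onesList a).Pairwise (· > ·) := by
  rw [onesList_eq]
  rw [List.pairwise_reverse]
  exact Nat.bitIndices_sorted.pairwise

lemma sum_onesList (a : ℕ) : ((onesList a).map (2 ^ ·)).sum = a := by
  rw [onesList_eq, List.map_reverse, List.sum_reverse]
  exact Nat.twoPowSum_bitIndices a

lemma sum_lt_two_pow : ∀ (L : List ℕ) (n : ℕ), L.Pairwise (· > ·) → (∀ x ∈ L, x < n) →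
    (L.map (2 ^ ·)).sum < 2 ^ n
  | [], n, _, _ => by simpa using Nat.pos_pow_of_pos n (by norm_num)
  | (h :: t), n, hs, hlt => by
    have ih := sum_lt_two_pow t h hs.of_cons (fun x hx => List.rel_of_pairwise_cons hs hx)
    have hhn : h < n := hlt h List.mem_cons_self
    have : 2 ^ (h + 1) ≤ 2 ^ n := Nat.pow_le_pow_right (by norm_num) (by omega)
    simp only [List.map_cons, List.sum_cons]
    calc 2 ^ h + (t.map (2 ^ ·)).sum < 2 ^ h + 2 ^ h := by omega
    _ = 2 ^ (h + 1) := by ring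
    _ ≤ 2 ^ n := this

/-- key comparison lemma -/

lemma sum_lt_iff (La Lb : List ℕ) (hA : La.Pairwise (· > ·)) (hB : Lb.Pairwise (· > ·)) (k : ℕ)
    (hpre : ∀ j < k, La[j]? = Lb[j]?)
    (hne : (La[k]?).elim (-1 : ℤ) (fun x => (x : ℤ)) ≠ (Lb[k]?).elim (-1 : ℤ) (fun x => (x : ℤ))) :
    ((La.map (2 ^ ·)).sum < (Lb.map (2 ^ ·)).sum ↔
      (La[k]?).elim (-1 : ℤ) (fun x => (x : ℤ)) < (Lb[k]?).elim (-1 : ℤ) (fun x => (x : ℤ))) := by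
  have htake : La.take k = Lb.take k := by
    apply List.ext_getElem?
    intro j
    rcases lt_or_ge j k with hj | hj
    · rw [List.getElem?_take_of_lt hj, List.getElem?_take_of_lt hj, hpre j hj]
    · rw [List.getElem?_eq_none_iff.2, List.getElem?_eq_none_iff.2]
      · exact le_trans (List.length_take_le _ _) hj
      · exact le_trans (List.length_take_le _ _) hj
  have hsplitA : (La.map (2 ^ ·)).sum = ((La.take k).map (2 ^ ·)).sum + ((La.drop k).map (2 ^ ·)).sum := by
    rw [← List.sum_append, ← List.map_append, List.take_append_drop]
  have hsplitB : (Lb.map (2 ^ ·)).sum = ((Lb.take k).map (2 ^ ·)).sum + ((Lb.drop k).map (2 ^ ·)).sum := by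
    rw [← List.sum_append, ← List.map_append, List.take_append_drop]
  have hgA : La[k]? = (La.drop k).head? := by
    rw [List.head?_drop]
  have hgB : Lb[k]? = (Lb.drop k).head? := by
    rw [List.head?_drop]
  have hdA : (La.drop k).Pairwise (· > ·) := hA.drop
  have hdB : (Lb.drop k).Pairwise (· > ·) := hB.drop
  rw [hgA, hgB] at hne
  rw [hsplitA, hsplitB, htake, Nat.add_lt_add_iff_left, hgA, hgB]
  clear hsplitA hsplitB hpre htake hgA hgB hA hB
  revert hdA hdB hne
  generalize La.drop k = da
  generalize Lb.drop k = db
  intro hne hdA hdB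
  have key : ∀ (x y : ℕ) (tx ty : List ℕ), (x :: tx).Pairwise (· > ·) → x < y →
      ((List.map (2 ^ ·) (x :: tx)).sum < (List.map (2 ^ ·) (y :: ty)).sum) := by
    intro x y tx ty hsx hxy
    have h1 : ((x :: tx).map (2 ^ ·)).sum < 2 ^ (x + 1) := by
      apply sum_lt_two_pow _ _ hsx
      intro z hz
      rcases List.mem_cons.1 hz with rfl | hz
      · omega
      · have := List.rel_of_pairwise_cons hsx hz; omega
    have h2 : 2 ^ (x + 1) ≤ 2 ^ y := Nat.pow_le_pow_right (by norm_num) (by omega)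
    have h3 : 2 ^ y ≤ ((y :: ty).map (2 ^ ·)).sum := by
      simp only [List.map_cons, List.sum_cons]; omega
    omega
  rcases da with _ | ⟨p, ta⟩ <;> rcases db with _ | ⟨q, tb⟩ <;>
      simp only [List.head?, Option.elim, List.map_cons, List.sum_cons, List.map_nil,
        List.sum_nil] at hne ⊢
  · omega
  · have : 0 < 2 ^ q := Nat.pow_pos (n := q) (by norm_num)
    constructor
    · intro _; omega
    · intro _; omega
  · have : 0 < 2 ^ p := Nat.pow_pos (n := p) (by norm_num)
    constructor
    · intro h; omega
    · intro h; omega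
  · have hpq : p ≠ q := by exact_mod_cast hne
    rcases lt_trichotomy p q with h | h | h
    · constructor
      · intro _; exact_mod_cast h
      · intro _
        have := key p q ta tb hdA h
        simpa using this
    · exact absurd h hpq
    · constructor
      · intro hlt
        exfalso
        have := key q p tb ta hdB h
        simp only [List.map_cons, List.sum_cons] at this
        omega
      · intro hlt
        exfalso
        have : (q : ℤ) < p := by exact_mod_cast h
        omega

lemma optElim_inj (o1 o2 : Option ℕ) :
    o1.elim (-1 : ℤ) (fun x => (x : ℤ)) = o2.elim (-1 : ℤ) (fun x => (x : ℤ)) ↔ o1 = o2 := by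
  cases o1 <;> cases o2 <;> simp <;> omega

lemma eq_of_agree (a b : ℕ)
    (H : ∀ ℓ, 1 ≤ ℓ → ℓ ≤ min (popCount a) (popCount b) + 1 → bitFn a ℓ = bitFn b ℓ) :
    a = b := by
  set m := min (popCount a) (popCount b) with hm
  have hget : ∀ j, j < m → (onesList a)[j]? = (onesList b)[j]? := by
    intro j hj
    have := H (j + 1) (by omega) (by omega)
    unfold bitFn at this
    simpa [optElim_inj] using this
  have hgm : (onesList a)[m]? = (onesList b)[m]? := by
    have := H (m + 1) (by omega) (by omega)
    unfold bitFn at this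
    simpa [optElim_inj] using this
  have hlen : (onesList a).length ≤ m ∧ (onesList b).length ≤ m := by
    rcases le_total (popCount a) (popCount b) with h | h
    · have hma : m = popCount a := by omega
      have h1 : (onesList a)[m]? = none := List.getElem?_eq_none_iff.2 (by unfold popCount at hma; omega)
      have h2 : (onesList b)[m]? = none := by rw [← hgm]; exact h1
      rw [List.getElem?_eq_none_iff] at h2
      unfold popCount at hma
      omega
    · have hmb : m = popCount b := by omega
      have h1 : (onesList b)[m]? = none := List.getElem?_eq_none_iff.2 (by unfold popCount at hmb; omega)
      have h2 : (onesList a)[m]? = none := by rw [hgm]; exact h1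
      rw [List.getElem?_eq_none_iff] at h2
      unfold popCount at hmb
      omega
  have : onesList a = onesList b := by
    apply List.ext_getElem?
    intro j
    rcases lt_or_ge j m with hj | hj
    · exact hget j hj
    · rw [List.getElem?_eq_none_iff.2 (by omega), List.getElem?_eq_none_iff.2 (by omega)]
  calc a = ((onesList a).map (2 ^ ·)).sum := (sum_onesList a).symm
  _ = ((onesList b).map (2 ^ ·)).sum := by rw [this]
  _ = b := sum_onesList b

/-- For distinct positive naturals `a` and `b`, there is a least
index `ℓ ≥ 1` where `bitFn a` and `bitFn b` differ; this `ℓ` is at most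
`min(popCount a, popCount b) + 1`, and `a < b` iff `bitFn a ℓ < bitFn b ℓ`. -/
theorem exists_least_bit_difference (a b : ℕ) (ha : 0 < a) (hb : 0 < b) (hab : a ≠ b) :
    ∃ ℓ : ℕ, 1 ≤ ℓ ∧ bitFn a ℓ ≠ bitFn b ℓ ∧
      (∀ ℓ', 1 ≤ ℓ' → bitFn a ℓ' ≠ bitFn b ℓ' → ℓ ≤ ℓ') ∧
      ℓ ≤ min (popCount a) (popCount b) + 1 ∧
      (a < b ↔ bitFn a ℓ < bitFn b ℓ) := by
  have hex : ∃ ℓ, 1 ≤ ℓ ∧ ℓ ≤ min (popCount a) (popCount b) + 1 ∧ bitFn a ℓ ≠ bitFn b ℓ := by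
    by_contra h
    push_neg at h
    exact hab (eq_of_agree a b h)
  have hP : ∃ ℓ, 1 ≤ ℓ ∧ bitFn a ℓ ≠ bitFn b ℓ := by
    obtain ⟨ℓ, h1, _, h3⟩ := hex
    exact ⟨ℓ, h1, h3⟩
  set ℓ := Nat.find hP with hℓ
  obtain ⟨h1, hne⟩ := Nat.find_spec hP
  refine ⟨ℓ, h1, hne, ?_, ?_, ?_⟩
  · intro ℓ' h1' hne'
    exact Nat.find_min' hP ⟨h1', hne'⟩
  · obtain ⟨ℓ₀, g1, g2, g3⟩ := hex
    exact le_trans (Nat.find_min' hP ⟨g1, g3⟩) g2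
  · have hpre : ∀ j < ℓ - 1, (onesList a)[j]? = (onesList b)[j]? := by
      intro j hj
      have hlt : j + 1 < ℓ := by omega
      have := Nat.find_min hP hlt
      push_neg at this
      have heq := this (by omega)
      unfold bitFn at heq
      simpa [optElim_inj] using heq
    have hne' : ((onesList a)[ℓ - 1]?).elim (-1 : ℤ) (fun x => (x : ℤ)) ≠
        ((onesList b)[ℓ - 1]?).elim (-1 : ℤ) (fun x => (x : ℤ)) := hne
    have := sum_lt_iff (onesList a) (onesList b) (onesList_sorted a) (onesList_sorted b)
      (ℓ - 1) hpre hne'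
    rw [sum_onesList, sum_onesList] at this
    exact this
end

section
/- Let G = (V,E) be a finite simple graph with injective identifiers id : V → ℕ. Consider the greedy recoloring step on colorings c : V → ℕ: a vertex v is enabled in c if some neighbor of v has the same color as v and every neighbor w of v with c(w) = c(v) satisfies id(w) > id(v); a step at an enabled vertex v produces the coloring c' with c'(v) equal to the least color in {1, …, δ(v)+1} not used by any neighbor of v (δ(v) the degree of v) and c'(u) = c(u) for all u ≠ v. Then recoloring steps never create new conflicts: if a vertex u has no neighbor sharing its color in c, and c' is obtained from c by a recoloring step at some vertex v ≠ u, then u has no neighbor sharing its color in c'. -/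
/-- Vertex `v` is in conflict in coloring `c` if some neighbor shares its color. -/
def Conflict {V : Type*} (G : SimpleGraph V) (c : V → ℕ) (v : V) : Prop :=
  ∃ w, G.Adj v w ∧ c w = c v

/-- Vertex `v` is enabled in `c` if it is in conflict and every neighbor sharing
its color has a larger identifier. -/
def Enabled {V : Type*} (G : SimpleGraph V) (id : V → ℕ) (c : V → ℕ) (v : V) : Prop :=
  Conflict G c v ∧ ∀ w, G.Adj v w → c w = c v → id v < id w

/-- The least color in `{1, …, δ(v)+1}` not used by any neighbor of `v`. -/
noncomputable def newColor {V : Type*} [Fintype V] (G : SimpleGraph V)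
    [DecidableRel G.Adj] (c : V → ℕ) (v : V) : ℕ :=
  sInf {k : ℕ | 1 ≤ k ∧ k ≤ G.degree v + 1 ∧ ∀ w, G.Adj v w → c w ≠ k}

/-- A greedy recoloring step at vertex `v` turns `c` into `c'`: `v` is enabled and
`c'` recolors `v` with the least color in `{1, …, δ(v)+1}` unused by `v`'s
neighbors, leaving all other vertices unchanged. -/
def RecolorStep {V : Type*} [Fintype V] [DecidableEq V] (G : SimpleGraph V)
    [DecidableRel G.Adj] (id : V → ℕ) (c : V → ℕ) (v : V) (c' : V → ℕ) : Prop :=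
  Enabled G id c v ∧ c' = Function.update c v (newColor G c v)

lemma newColor_mem {V : Type*} [Fintype V] (G : SimpleGraph V)
    [DecidableRel G.Adj] (c : V → ℕ) (v : V) :
    1 ≤ newColor G c v ∧ newColor G c v ≤ G.degree v + 1 ∧
      ∀ w, G.Adj v w → c w ≠ newColor G c v := by
  have hne : {k : ℕ | 1 ≤ k ∧ k ≤ G.degree v + 1 ∧ ∀ w, G.Adj v w → c w ≠ k}.Nonempty := by
    classical
    set s := (G.neighborFinset v).image c with hs
    have hcard : s.card ≤ G.degree v := by
      rw [← SimpleGraph.card_neighborFinset_eq_degree]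
      exact Finset.card_image_le
    have hsub : ¬ (Finset.Icc 1 (G.degree v + 1) ⊆ s) := by
      intro h
      have h2 := Finset.card_le_card h
      rw [Nat.card_Icc] at h2
      omega
    obtain ⟨k, hk, hks⟩ := Finset.not_subset.mp hsub
    refine ⟨k, ?_, ?_, ?_⟩
    · exact (Finset.mem_Icc.mp hk).1
    · exact (Finset.mem_Icc.mp hk).2
    · intro w hw hc
      exact hks (Finset.mem_image.mpr ⟨w, by simpa using hw, hc⟩)
  exact Nat.sInf_mem hne

/-- Recoloring steps never create new conflicts: if `u` has no
neighbor sharing its color in `c`, and `c'` is obtained from `c` by a recoloring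
step at some vertex `v ≠ u`, then `u` has no neighbor sharing its color in `c'`. -/
theorem recolorStep_preserves_no_conflict {V : Type*} [Fintype V] [DecidableEq V]
    (G : SimpleGraph V) [DecidableRel G.Adj] (id : V → ℕ)
    (hinj : Function.Injective id) (c c' : V → ℕ) (u v : V) (huv : v ≠ u)
    (hu : ¬ Conflict G c u) (hstep : RecolorStep G id c v c') :
    ¬ Conflict G c' u := by
  obtain ⟨_, hc'⟩ := hstep
  rintro ⟨w, hadj, hcw⟩
  have hcu : c' u = c u := by simp [hc', Function.update_of_ne (Ne.symm huv)]
  by_cases hwv : w = v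
  · subst hwv
    have hnew : c' w = newColor G c w := by simp [hc']
    have := (newColor_mem G c w).2.2 u (G.adj_symm hadj)
    rw [hnew, hcu] at hcw
    exact this hcw.symm
  · have : c' w = c w := by simp [hc', Function.update_of_ne hwv]
    exact hu ⟨w, hadj, by rw [← this, hcw, hcu]⟩
end

section
/- Let G = (V,E) be a finite simple graph with injective identifiers id : V → ℕ, and consider the greedy recoloring step on colorings c : V → ℕ. If a coloring c has at least one monochromatic edge (two adjacent vertices with the same color), then some vertex is enabled in c; in particular, the vertex with the smallest identifier among all vertices that are in conflict is enabled. -/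
/-- If a coloring has a monochromatic edge, then some vertex is
enabled; in particular, any conflicted vertex of minimal identifier among the
conflicted vertices is enabled. -/
theorem enabled_of_monochromatic_edge {V : Type*} [Fintype V] [DecidableEq V]
    (G : SimpleGraph V) [DecidableRel G.Adj] (id : V → ℕ)
    (hinj : Function.Injective id) (c : V → ℕ)
    (hmono : ∃ u w, G.Adj u w ∧ c u = c w) :
    (∃ v, Enabled G id c v) ∧
      ∀ v, Conflict G c v → (∀ u, Conflict G c u → id v ≤ id u) →
        Enabled G id c v := by
  classical
  have hmin : ∀ v, Conflict G c v → (∀ u, Conflict G c u → id v ≤ id u) →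
      Enabled G id c v := by
    intro v hv hle
    refine ⟨hv, fun w hadj hcw => ?_⟩
    have hwconf : Conflict G c w := ⟨v, hadj.symm, hcw.symm⟩
    have h := hle w hwconf
    have hne : v ≠ w := G.ne_of_adj hadj
    exact lt_of_le_of_ne h (fun h' => hne (hinj h'))
  refine ⟨?_, hmin⟩
  obtain ⟨u, w, hadj, hcu⟩ := hmono
  have hne : (Finset.univ.filter (fun v => Conflict G c v)).Nonempty :=
    ⟨u, by simp only [Finset.mem_filter, Finset.mem_univ, true_and]; exact ⟨w, hadj, hcu.symm⟩⟩
  obtain ⟨v, hv, hvmin⟩ := Finset.exists_min_image _ id hne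
  simp only [Finset.mem_filter, Finset.mem_univ, true_and] at hv hvmin
  exact ⟨v, hmin v hv (fun x hx => hvmin x hx)⟩
end

section
/- Let G = (V,E) be a finite simple graph with injective identifiers id : V → ℕ, and consider the greedy recoloring step on colorings c : V → ℕ. Then every sequence of recoloring steps starting from an arbitrary coloring has length at most |V|; more precisely, each vertex performs at most one recoloring step in any such sequence. -/
lemma newColor_not_adj {V : Type*} [Fintype V] (G : SimpleGraph V)
    [DecidableRel G.Adj] (c : V → ℕ) (v w : V) (hadj : G.Adj v w) :
    c w ≠ newColor G c v := by
  have hne : {k : ℕ | 1 ≤ k ∧ k ≤ G.degree v + 1 ∧ ∀ w, G.Adj v w → c w ≠ k}.Nonempty := by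
    have : ∃ k ∈ Finset.Icc 1 (G.degree v + 1), k ∉ (G.neighborFinset v).image c := by
      by_contra h
      push_neg at h
      have hsub : Finset.Icc 1 (G.degree v + 1) ⊆ (G.neighborFinset v).image c :=
        fun k hk => h k hk
      have h1 := Finset.card_le_card hsub
      have h2 : ((G.neighborFinset v).image c).card ≤ G.degree v := by
        have := Finset.card_image_le (s := G.neighborFinset v) (f := c)
        simpa [SimpleGraph.card_neighborFinset_eq_degree] using this
      simp [Nat.card_Icc] at h1
      omega
    obtain ⟨k, hk, hk2⟩ := this
    rw [Finset.mem_Icc] at hk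
    refine ⟨k, hk.1, hk.2, fun u hu hc => hk2 ?_⟩
    exact Finset.mem_image.mpr ⟨u, by simpa [SimpleGraph.mem_neighborFinset] using hu, hc⟩
  have hmem := Nat.sInf_mem hne
  exact hmem.2.2 w hadj

/-- In any sequence of greedy recoloring steps, each vertex is
recolored at most once; hence every such sequence has length at most `|V|`. -/
theorem recolor_sequence_length_le_card {V : Type*} [Fintype V] [DecidableEq V]
    (G : SimpleGraph V) [DecidableRel G.Adj] (id : V → ℕ)
    (hinj : Function.Injective id)
    (len : ℕ) (cs : ℕ → V → ℕ) (vs : ℕ → V)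
    (hsteps : ∀ i < len, RecolorStep G id (cs i) (vs i) (cs (i + 1))) :
    (∀ i j, i < len → j < len → vs i = vs j → i = j) ∧ len ≤ Fintype.card V := by
  -- Part 1: each vertex recolored at most once
  have key : ∀ i j, i < len → j < len → vs i = vs j → i = j := by
    have main : ∀ i j, i < j → i < len → j < len → vs i = vs j → False := by
      intro i j hij hi hj hv
      set v := vs i with hvdef
      -- invariant: for all k with i < k ≤ j, v keeps its color and is conflict-free
      have inv : ∀ k, i < k → k ≤ j → ∀ w, G.Adj v w → cs k w ≠ cs k v := by
        intro k hk1 hk2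
        induction k with
        | zero => omega
        | succ n ih =>
          rcases Nat.lt_or_ge i n with hn | hn
          · -- n > i : use ih for n, step at vs n
            have hnlen : n < len := by omega
            obtain ⟨⟨_, _⟩, heq⟩ := hsteps n hnlen
            have ihn := ih hn (by omega)
            have hu : vs n ≠ v := by
              intro h
              obtain ⟨⟨w, hw, hcw⟩, _⟩ := (hsteps n hnlen).1
              rw [h] at hw hcw
              exact ihn w hw hcw
            intro w hw
            rw [heq]
            rw [Function.update_of_ne (fun h => hu h.symm)]
            by_cases hwu : w = vs n
            · subst hwu
              rw [Function.update_self]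
              intro h
              have := newColor_not_adj G (cs n) (vs n) v hw.symm
              exact this h.symm
            · rw [Function.update_of_ne hwu]
              exact ihn w hw
          · -- n = i : base case
            have hni : n = i := by omega
            subst hni
            obtain ⟨hen, heq⟩ := hsteps n (by omega)
            intro w hw
            have hwv : w ≠ v := fun h => (G.ne_of_adj hw) h.symm
            rw [heq, Function.update_of_ne hwv, Function.update_self]
            exact newColor_not_adj G (cs n) v w hw
      -- at step j, v is in conflict, contradiction
      obtain ⟨⟨w, hw, hcw⟩, _⟩ := (hsteps j hj).1
      rw [← hv] at hw hcw
      exact inv j (by omega) le_rfl w hw hcw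
    intro i j hi hj hv
    rcases lt_trichotomy i j with h | h | h
    · exact absurd hv (fun hv => main i j h hi hj hv)
    · exact h
    · exact absurd hv.symm (fun hv => main j i h hj hi hv)
  refine ⟨key, ?_⟩
  -- Part 2: len ≤ card V
  have hinj' : Function.Injective (fun k : Fin len => vs k) := by
    intro a b hab
    exact Fin.ext (key a b a.2 b.2 hab)
  simpa using Fintype.card_le_of_injective _ hinj'
end

section
/- Let G = (V,E) be a finite simple graph with maximum degree Δ and injective identifiers id : V → ℕ, and consider the greedy recoloring step on colorings c : V → ℕ. Then every maximal sequence of recoloring steps (one that cannot be extended) starting from an arbitrary coloring c₀ is finite, and its final coloring is a proper coloring of G (no two adjacent vertices share a color). Moreover, if the initial coloring satisfies c₀(v) ∈ {1, …, Δ+1} for every vertex v, then the final coloring is a proper (Δ+1)-coloring of G, i.e., it is proper and takes values in {1, …, Δ+1}. -/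
/-- A coloring is proper if adjacent vertices get distinct colors. -/
def ProperColoring {V : Type*} (G : SimpleGraph V) (c : V → ℕ) : Prop :=
  ∀ u w, G.Adj u w → c u ≠ c w

/-- A recoloring step creates no new conflicts and removes the recolored vertex
from conflict. -/
lemma conflict_after_step {V : Type*} [Fintype V] [DecidableEq V] (G : SimpleGraph V)
    [DecidableRel G.Adj] (id : V → ℕ) (c : V → ℕ) (v : V) (c' : V → ℕ)
    (hs : RecolorStep G id c v c') (u : V) (hc : Conflict G c' u) :
    Conflict G c u ∧ u ≠ v := by
  obtain ⟨-, rfl⟩ := hs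
  obtain ⟨w, hadj, hcw⟩ := hc
  have hnc := (newColor_mem G c v).2.2
  have hwu : w ≠ u := fun h => (G.ne_of_adj hadj) h.symm
  by_cases hu : u = v
  · subst hu
    rw [Function.update_self, Function.update_of_ne hwu] at hcw
    exact absurd hcw (hnc w hadj)
  · rw [Function.update_of_ne hu] at hcw
    by_cases hw : w = v
    · subst hw
      rw [Function.update_self] at hcw
      exact absurd hcw.symm (hnc u hadj.symm)
    · rw [Function.update_of_ne hw] at hcw
      exact ⟨⟨w, hadj, hcw⟩, hu⟩

/-- Every maximal sequence of greedy recoloring steps is finite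
(there is no infinite sequence of steps), and its final coloring — one in which no
vertex is enabled — is proper. Moreover, if the initial coloring takes values in
`{1, …, Δ+1}`, so does the final coloring, which is thus a proper
`(Δ+1)`-coloring. -/
theorem maximal_recolor_sequence_proper {V : Type*} [Fintype V] [DecidableEq V]
    (G : SimpleGraph V) [DecidableRel G.Adj] (id : V → ℕ)
    (hinj : Function.Injective id) :
    (¬ ∃ (cs : ℕ → V → ℕ) (vs : ℕ → V),
        ∀ i : ℕ, RecolorStep G id (cs i) (vs i) (cs (i + 1))) ∧
    (∀ (c₀ : V → ℕ) (len : ℕ) (cs : ℕ → V → ℕ) (vs : ℕ → V),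
        cs 0 = c₀ →
        (∀ i < len, RecolorStep G id (cs i) (vs i) (cs (i + 1))) →
        (∀ v, ¬ Enabled G id (cs len) v) →
        ProperColoring G (cs len) ∧
          ((∀ v, 1 ≤ c₀ v ∧ c₀ v ≤ G.maxDegree + 1) →
            ∀ v, 1 ≤ cs len v ∧ cs len v ≤ G.maxDegree + 1)) := by
  classical
  constructor
  · rintro ⟨cs, vs, hstep⟩
    set f : ℕ → ℕ := fun i => (Finset.univ.filter (fun u => Conflict G (cs i) u)).card with hf
    have hdec : ∀ i, f (i + 1) < f i := by
      intro i
      apply Finset.card_lt_card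
      rw [Finset.ssubset_iff_of_subset]
      · refine ⟨vs i, ?_, ?_⟩
        · simp only [Finset.mem_filter, Finset.mem_univ, true_and]
          exact (hstep i).1.1
        · simp only [Finset.mem_filter, Finset.mem_univ, true_and]
          intro hcon
          exact (conflict_after_step G id (cs i) (vs i) (cs (i + 1)) (hstep i) (vs i) hcon).2 rfl
      · intro u hu
        simp only [Finset.mem_filter, Finset.mem_univ, true_and] at hu ⊢
        exact (conflict_after_step G id (cs i) (vs i) (cs (i + 1)) (hstep i) u hu).1
    have hmono : ∀ n, f n + n ≤ f 0 := by
      intro n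
      induction n with
      | zero => omega
      | succ n ih => have := hdec n; omega
    have := hmono (f 0 + 1)
    omega
  · intro c₀ len cs vs h0 hsteps hfinal
    constructor
    · intro u w hadj hcuw
      set S : Finset V := Finset.univ.filter (fun x => Conflict G (cs len) x) with hS
      have hSne : S.Nonempty :=
        ⟨u, by simp only [hS, Finset.mem_filter, Finset.mem_univ, true_and];
               exact ⟨w, hadj, hcuw.symm⟩⟩
      obtain ⟨v, hvS, hvmin⟩ := Finset.exists_min_image S id hSne
      simp only [hS, Finset.mem_filter, Finset.mem_univ, true_and] at hvS
      refine hfinal v ⟨hvS, fun w' hadj' hc' => ?_⟩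
      have hw'S : w' ∈ S := by
        simp only [hS, Finset.mem_filter, Finset.mem_univ, true_and]
        exact ⟨v, hadj'.symm, hc'.symm⟩
      have hle := hvmin w' hw'S
      have hne : v ≠ w' := G.ne_of_adj hadj'
      exact lt_of_le_of_ne hle (fun h => hne (hinj h))
    · intro hb v
      have key : ∀ i ≤ len, ∀ u, 1 ≤ cs i u ∧ cs i u ≤ G.maxDegree + 1 := by
        intro i
        induction i with
        | zero => intro _ u; rw [h0]; exact hb u
        | succ i ih =>
          intro hi u
          have hstep := hsteps i (by omega)
          obtain ⟨-, hup⟩ := hstep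
          rw [hup]
          by_cases hu : u = vs i
          · subst hu
            rw [Function.update_self]
            have := newColor_mem G (cs i) (vs i)
            have hd := SimpleGraph.degree_le_maxDegree G (vs i)
            exact ⟨this.1, by omega⟩
          · rw [Function.update_of_ne hu]
            exact ih (by omega) u
      exact key len le_rfl v
end
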